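/- Let G be a residually finite discrete group with finite NCC that is not cyclic. Then there is no surjective group homomorphism from G onto the integers ℤ. -/

import Mathlib

/-- `CC G Φ`: the smallest number of cyclic subgroups of `G` whose `Φ`-orbits cover `G`. -/
noncomputable def CC (G Φ : Type*) [Group G] [Group Φ] [MulDistribMulAction Φ G] : ℕ∞ :=
  sInf {n : ℕ∞ | ∃ s : Finset G, (s.card : ℕ∞) = n ∧
    ∀ x : G, ∃ g ∈ s, ∃ φ : Φ, x ∈ Subgroup.zpowers (φ • g)}

/-- `NCC G`: the smallest number of cyclic subgroups of `G` whose conjugacy classes cover `G`. -/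
noncomputable def NCC (G : Type*) [Group G] : ℕ∞ := CC G (ConjAct G)

/-- Let `G` be a residually finite discrete group with finite NCC which is not cyclic.
Then there is no surjective homomorphism from `G` onto `ℤ`. -/
theorem stmt_6 {G : Type*} [Group G]
    (hrf : ∀ g : G, g ≠ 1 → ∃ (F : Type) (_ : Group F) (_ : Finite F) (f : G →* F), f g ≠ 1)
    (hncc : NCC G ≠ ⊤) (hcyc : ¬ IsCyclic G) :
    ¬ ∃ f : G →* Multiplicative ℤ, Function.Surjective f := by
  rintro ⟨f, hf⟩
  -- the kernel of `f` is nontrivial, else `G` would be cyclic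
  have hker : ∃ g₀ : G, g₀ ≠ 1 ∧ f g₀ = 1 := by
    by_contra hk
    push_neg at hk
    have hinj : Function.Injective f := by
      rw [← MonoidHom.ker_eq_bot_iff, eq_bot_iff]
      intro g hg
      by_contra hg1
      exact hk g (by simpa using hg1) hg
    have : IsCyclic G := by
      have e := MulEquiv.ofBijective f ⟨hinj, hf⟩
      exact isCyclic_of_surjective e.symm e.symm.surjective
    exact hcyc this
  obtain ⟨g₀, hg₀, hfg₀⟩ := hker
  obtain ⟨F, _, _, h, ht⟩ := hrf g₀ hg₀
  -- extract a finite covering family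
  have hcov : ∃ s : Finset G,
      ∀ x : G, ∃ g ∈ s, ∃ φ : ConjAct G, x ∈ Subgroup.zpowers (φ • g) := by
    by_contra hc
    push_neg at hc
    apply hncc
    unfold NCC CC
    refine (congrArg sInf ?_).trans sInf_empty
    rw [Set.eq_empty_iff_forall_notMem]
    rintro n ⟨s, -, hs⟩
    obtain ⟨x, hx⟩ := hc s
    obtain ⟨g, hg, φ, hmem⟩ := hs x
    exact hx g hg φ hmem
  obtain ⟨s, hs⟩ := hcov
  obtain ⟨u, hu⟩ := hf (Multiplicative.ofAdd 1)
  set c : ℕ := Nat.card F with hcdef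
  have hcpos : 0 < c := Nat.card_pos
  set P : ℕ := ∏ g ∈ s, max (Multiplicative.toAdd (f g)).natAbs 1 with hPdef
  set M : ℕ := c * P with hMdef
  have hMpos : 0 < M := by
    apply Nat.mul_pos hcpos
    apply Finset.prod_pos
    intro g hg
    exact lt_of_lt_of_le one_pos (le_max_right _ _)
  set x : G := u ^ M * g₀ with hxdef
  obtain ⟨g, hg, φ, hmem⟩ := hs x
  obtain ⟨k, hk⟩ := hmem
  -- `f` kills conjugation
  have hconj : ∀ y : G, f (φ • y) = f y := by
    intro y
    rw [ConjAct.smul_def]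
    simp only [map_mul, map_inv]
    rw [mul_comm, inv_mul_cancel_left]
  have hhconj : ∀ y : G, h (φ • y) = h (ConjAct.ofConjAct φ) * h y * (h (ConjAct.ofConjAct φ))⁻¹ := by
    intro y
    rw [ConjAct.smul_def]
    simp [map_mul, map_inv]
  -- compute f x
  have hfx : Multiplicative.toAdd (f x) = (M : ℤ) := by
    rw [hxdef]
    simp [map_mul, map_pow, hu, hfg₀]
  set a : ℤ := Multiplicative.toAdd (f g) with hadef
  have hMka : (M : ℤ) = k * a := by
    rw [← hfx, ← hk]
    simp [map_zpow, hconj g, hadef]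
  have ha : a ≠ 0 := by
    intro h0
    rw [h0, mul_zero] at hMka
    exact hMpos.ne' (by exact_mod_cast hMka)
  -- (c : ℤ) * a divides M
  have hdvd : (c : ℤ) * a ∣ (M : ℤ) := by
    rw [← Int.natAbs_dvd_natAbs, Int.natAbs_mul, Int.natAbs_natCast, Int.natAbs_natCast, hMdef]
    apply mul_dvd_mul_left
    have h1 : a.natAbs ∣ P := by
      have h2 : max a.natAbs 1 ∣ P := Finset.dvd_prod_of_mem
        (fun g => max (Multiplicative.toAdd (f g)).natAbs 1) hg
      rwa [max_eq_left (Nat.one_le_iff_ne_zero.2 (Int.natAbs_ne_zero.2 ha))] at h2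
    exact_mod_cast h1
  -- hence c ∣ k
  have hck : (c : ℤ) ∣ k := by
    have h2 : (c : ℤ) * a ∣ k * a := hMka ▸ hdvd
    exact (mul_dvd_mul_iff_right ha).mp h2
  obtain ⟨m, hm⟩ := hck
  -- now h x = 1
  have hx1 : h x = 1 := by
    rw [← hk, map_zpow, hhconj, conj_zpow, hm, zpow_mul, zpow_natCast,
      pow_card_eq_one', one_zpow, mul_one, mul_inv_cancel]
  -- but h x = h g₀ ≠ 1
  have hx2 : h x = h g₀ := by
    rw [hxdef, map_mul, map_pow, hMdef, pow_mul, pow_card_eq_one', one_pow, one_mul]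
  rw [hx1] at hx2
  exact ht hx2.symm
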